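/- Validity of the permutation p-value: if T₀, T₁, ..., T_B are exchangeable and almost surely pairwise distinct, and p := (1 + Σ_{j=1}^B 1[T₀ ≤ T_j])/(B+1), then P(p ≤ α) ≤ α for every α ∈ (0,1). -/

import Mathlib

open MeasureTheory Finset

lemma card_filter_comp_perm {n : ℕ} (σ : Equiv.Perm (Fin n)) (P : Fin n → Prop)
    [DecidablePred P] :
    ((univ : Finset (Fin n)).filter fun j => P (σ j)).card = (univ.filter P).card := by
  apply Finset.card_bij (fun j _ => σ j)
  · intro a ha
    simp only [mem_filter, mem_univ, true_and] at ha ⊢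
    exact ha
  · intro a _ b _ h
    exact σ.injective h
  · intro b hb
    refine ⟨σ.symm b, ?_, by simp⟩
    simp only [mem_filter, mem_univ, true_and] at hb ⊢
    simpa using hb

/-- Validity of the permutation p-value: if `T 0, T 1, ..., T B` are exchangeable and almost
surely pairwise distinct, and `p = (1 + Σ_{j=1}^B 1[T 0 ≤ T j])/(B+1)`, then `P(p ≤ α) ≤ α`
for every `α ∈ (0,1)`. -/
theorem permutation_pvalue_valid {Ω : Type*} [MeasurableSpace Ω] (μ : Measure Ω)
    [IsProbabilityMeasure μ] (B : ℕ) (T : Fin (B + 1) → Ω → ℝ)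
    (hmeas : ∀ i, Measurable (T i))
    (hexch : ∀ σ : Equiv.Perm (Fin (B + 1)),
      μ.map (fun ω i => T (σ i) ω) = μ.map (fun ω i => T i ω))
    (hdistinct : ∀ i j, i ≠ j → μ {ω | T i ω = T j ω} = 0)
    (p : Ω → ℝ)
    (hp : ∀ ω, p ω =
      (1 + ((Finset.univ.filter (fun j : Fin (B + 1) => j ≠ 0 ∧ T 0 ω ≤ T j ω)).card : ℝ))
        / (B + 1)) :
    ∀ α ∈ Set.Ioo (0 : ℝ) 1, μ {ω | p ω ≤ α} ≤ ENNReal.ofReal α := by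
  intro α hα
  obtain ⟨hα0, hα1⟩ := hα
  classical
  -- the rank counts
  set N : Fin (B + 1) → Ω → ℕ := fun i ω =>
    (univ.filter (fun j : Fin (B + 1) => j ≠ i ∧ T i ω ≤ T j ω)).card with hNdef
  -- events
  set A : Fin (B + 1) → Set Ω := fun i =>
    {ω | (1 + (N i ω : ℝ)) / (B + 1) ≤ α} with hAdef
  have hBpos : (0 : ℝ) < (B : ℝ) + 1 := by positivity
  -- the target set is A 0
  have hset : {ω | p ω ≤ α} = A 0 := by
    ext ω
    rw [Set.mem_setOf_eq, hp ω]
    exact Iff.rfl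
  -- measurability of N i
  have hNmeas : ∀ i, Measurable (fun ω => N i ω) := by
    intro i
    have heq : (fun ω => N i ω) = fun ω =>
        ∑ j : Fin (B + 1), if j ≠ i ∧ T i ω ≤ T j ω then 1 else 0 := by
      funext ω
      exact Finset.card_filter _ _
    rw [heq]
    apply Finset.measurable_sum
    intro j _
    have hmj : MeasurableSet {ω | j ≠ i ∧ T i ω ≤ T j ω} := by
      have h2 : {ω | j ≠ i ∧ T i ω ≤ T j ω} = {ω | j ≠ i} ∩ {ω | T i ω ≤ T j ω} := rfl
      rw [h2]
      exact (MeasurableSet.const _).inter (measurableSet_le (hmeas i) (hmeas j))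
    exact Measurable.ite hmj measurable_const measurable_const
  have hAmeas : ∀ i, MeasurableSet (A i) := by
    intro i
    have h2 : A i = (fun ω => N i ω) ⁻¹' {m : ℕ | (1 + (m : ℝ)) / (B + 1) ≤ α} := rfl
    rw [h2]
    exact (hNmeas i) (by trivial)
  -- exchangeability: all A i have the same measure
  have hsame : ∀ i, μ (A i) = μ (A 0) := by
    intro i
    -- sets on the sequence space
    set S : Fin (B + 1) → Set (Fin (B + 1) → ℝ) := fun i =>
      {v | (1 + (((univ.filter (fun j : Fin (B + 1) => j ≠ i ∧ v i ≤ v j)).card : ℕ) : ℝ))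
        / (B + 1) ≤ α} with hSdef
    have hSmeas : ∀ k, MeasurableSet (S k) := by
      intro k
      have hg : Measurable (fun v : Fin (B + 1) → ℝ =>
          (univ.filter (fun j : Fin (B + 1) => j ≠ k ∧ v k ≤ v j)).card) := by
        have heq : (fun v : Fin (B + 1) → ℝ =>
            (univ.filter (fun j : Fin (B + 1) => j ≠ k ∧ v k ≤ v j)).card)
            = fun v => ∑ j : Fin (B + 1), if j ≠ k ∧ v k ≤ v j then 1 else 0 := by
          funext v
          exact Finset.card_filter _ _
        rw [heq]
        apply Finset.measurable_sum
        intro j _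
        have hmj : MeasurableSet {v : Fin (B + 1) → ℝ | j ≠ k ∧ v k ≤ v j} := by
          have h2 : {v : Fin (B + 1) → ℝ | j ≠ k ∧ v k ≤ v j}
              = {v : Fin (B + 1) → ℝ | j ≠ k} ∩ {v | v k ≤ v j} := rfl
          rw [h2]
          exact (MeasurableSet.const _).inter
            (measurableSet_le (measurable_pi_apply k) (measurable_pi_apply j))
        exact Measurable.ite hmj measurable_const measurable_const
      have h2 : S k = (fun v : Fin (B + 1) → ℝ =>
          (univ.filter (fun j : Fin (B + 1) => j ≠ k ∧ v k ≤ v j)).card)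
          ⁻¹' {m : ℕ | (1 + (m : ℝ)) / (B + 1) ≤ α} := rfl
      rw [h2]
      exact hg (by trivial)
    set vec : Ω → (Fin (B + 1) → ℝ) := fun ω j => T j ω with hvecdef
    have hvec : Measurable vec := measurable_pi_lambda _ (fun j => hmeas j)
    have hAv : ∀ k, A k = vec ⁻¹' (S k) := fun k => rfl
    set σ : Equiv.Perm (Fin (B + 1)) := Equiv.swap 0 i with hσdef
    have hσ0 : σ 0 = i := Equiv.swap_apply_left 0 i
    have hprecomp : Measurable (fun v : Fin (B + 1) → ℝ => v ∘ σ) :=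
      measurable_pi_lambda _ (fun j => measurable_pi_apply (σ j))
    have hSswap : S i = (fun v : Fin (B + 1) → ℝ => v ∘ σ) ⁻¹' (S 0) := by
      ext v
      simp only [hSdef, Set.mem_preimage, Set.mem_setOf_eq, Function.comp_apply, hσ0]
      have hcard : (univ.filter (fun j : Fin (B + 1) => j ≠ 0 ∧ v i ≤ v (σ j))).card
          = (univ.filter (fun j : Fin (B + 1) => j ≠ i ∧ v i ≤ v j)).card := by
        have h3 := card_filter_comp_perm σ (fun j : Fin (B + 1) => j ≠ i ∧ v i ≤ v j)
        rw [← h3]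
        congr 1
        apply Finset.filter_congr
        intro j _
        have h4 : σ j ≠ i ↔ j ≠ 0 := by
          rw [← hσ0]
          exact not_congr σ.apply_eq_iff_eq
        simp [h4]
      rw [hcard]
    rw [hAv i, hAv 0]
    calc μ (vec ⁻¹' S i) = μ.map vec (S i) := (Measure.map_apply hvec (hSmeas i)).symm
      _ = μ.map vec ((fun v : Fin (B + 1) → ℝ => v ∘ σ) ⁻¹' (S 0)) := by rw [← hSswap]
      _ = (μ.map vec).map (fun v : Fin (B + 1) → ℝ => v ∘ σ) (S 0) :=
          (Measure.map_apply hprecomp (hSmeas 0)).symm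
      _ = μ.map ((fun v : Fin (B + 1) → ℝ => v ∘ σ) ∘ vec) (S 0) := by
          rw [Measure.map_map hprecomp hvec]
      _ = μ.map (fun ω i => T (σ i) ω) (S 0) := rfl
      _ = μ.map vec (S 0) := by rw [hexch σ]
      _ = μ (vec ⁻¹' S 0) := Measure.map_apply hvec (hSmeas 0)
  -- a.e. distinctness
  have hG : ∀ᵐ ω ∂μ, ∀ i j : Fin (B + 1), i ≠ j → T i ω ≠ T j ω := by
    rw [ae_all_iff]
    intro i
    rw [ae_all_iff]
    intro j
    by_cases hij : i = j
    · filter_upwards with ω h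
      exact absurd hij h
    · rw [ae_iff]
      have h2 : {a | ¬ (i ≠ j → T i a ≠ T j a)} = {ω | T i ω = T j ω} := by
        ext ω
        simp [hij]
      rw [h2]
      exact hdistinct i j hij
  -- pointwise bound under distinctness
  have hptwise : ∀ ω, (∀ i j : Fin (B + 1), i ≠ j → T i ω ≠ T j ω) →
      (∑ i : Fin (B + 1), (A i).indicator (fun _ => (1 : ENNReal)) ω)
        ≤ ENNReal.ofReal (α * ((B : ℝ) + 1)) := by
    intro ω hω
    have hsum_eq : (∑ i : Fin (B + 1), (A i).indicator (fun _ => (1 : ENNReal)) ω)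
        = ((univ.filter (fun i : Fin (B + 1) => ω ∈ A i)).card : ENNReal) := by
      rw [Finset.card_filter]
      push_cast
      apply Finset.sum_congr rfl
      intro i _
      by_cases h : ω ∈ A i <;> simp [Set.indicator_apply, h]
    rw [hsum_eq]
    -- strict monotonicity of ranks
    have hmono : ∀ i j : Fin (B + 1), T i ω < T j ω → N j ω < N i ω := by
      intro i j hij
      apply Finset.card_lt_card
      have hsub : (univ.filter (fun k : Fin (B + 1) => k ≠ j ∧ T j ω ≤ T k ω))
          ⊆ (univ.filter (fun k : Fin (B + 1) => k ≠ i ∧ T i ω ≤ T k ω)) := by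
        intro k hk
        simp only [mem_filter, mem_univ, true_and] at hk ⊢
        obtain ⟨hkj, hjk⟩ := hk
        refine ⟨?_, le_of_lt (lt_of_lt_of_le hij hjk)⟩
        intro hki
        rw [hki] at hjk
        exact absurd hij (not_lt.2 hjk)
      refine (Finset.ssubset_iff_of_subset hsub).2 ⟨j, ?_, ?_⟩
      · simp only [mem_filter, mem_univ, true_and]
        refine ⟨?_, le_of_lt hij⟩
        intro h
        rw [h] at hij
        exact lt_irrefl _ hij
      · simp only [mem_filter, mem_univ, true_and, not_and]
        intro h
        exact absurd rfl h
    have hinj : ∀ i j : Fin (B + 1), i ≠ j → N i ω ≠ N j ω := by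
      intro i j hij
      rcases lt_or_gt_of_ne (hω i j hij) with h | h
      · exact (hmono i j h).ne'
      · exact (hmono j i h).ne
    set c : ℝ := α * ((B : ℝ) + 1) - 1 with hc
    have hmemA : ∀ i : Fin (B + 1), ω ∈ A i ↔ ((N i ω : ℝ)) ≤ c := by
      intro i
      simp only [hAdef, Set.mem_setOf_eq]
      rw [div_le_iff₀ hBpos, hc]
      constructor <;> intro h <;> linarith
    have hNle : ∀ i : Fin (B + 1), N i ω ≤ B := by
      intro i
      have hsub : (univ.filter (fun j : Fin (B + 1) => j ≠ i ∧ T i ω ≤ T j ω))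
          ⊆ univ.erase i := by
        intro j hj
        simp only [mem_filter, mem_univ, true_and] at hj
        exact Finset.mem_erase.2 ⟨hj.1, Finset.mem_univ j⟩
      have h5 := Finset.card_le_card hsub
      rwa [Finset.card_erase_of_mem (Finset.mem_univ i), Finset.card_univ,
        Fintype.card_fin, Nat.add_sub_cancel] at h5
    -- injection into the set of natural numbers ≤ c
    have hcard1 : (univ.filter (fun i : Fin (B + 1) => ω ∈ A i)).card
        ≤ ((Finset.range (B + 1)).filter (fun m : ℕ => (m : ℝ) ≤ c)).card := by
      apply Finset.card_le_card_of_injOn (fun i => N i ω)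
      · intro i hi
        simp only [Finset.mem_coe, mem_filter, mem_univ, true_and] at hi
        simp only [Finset.mem_coe, mem_filter, Finset.mem_range]
        exact ⟨Nat.lt_succ_of_le (hNle i), (hmemA i).1 hi⟩
      · intro i _ j _ h
        by_contra hij
        exact hinj i j hij h
    have hcard2 : ((((Finset.range (B + 1)).filter (fun m : ℕ => (m : ℝ) ≤ c)).card : ℕ) : ℝ)
        ≤ α * ((B : ℝ) + 1) := by
      by_cases hcpos : 0 ≤ c
      · have hsub : (Finset.range (B + 1)).filter (fun m : ℕ => (m : ℝ) ≤ c)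
            ⊆ Finset.range (Nat.floor c + 1) := by
          intro m hm
          simp only [mem_filter, Finset.mem_range] at hm
          exact Finset.mem_range.2 (Nat.lt_succ_of_le ((Nat.le_floor_iff hcpos).2 hm.2))
        have h1 := Finset.card_le_card hsub
        rw [Finset.card_range] at h1
        have h2 : ((Nat.floor c : ℝ)) ≤ c := Nat.floor_le hcpos
        have h3 := (Nat.cast_le (α := ℝ)).2 h1
        push_cast at h3
        linarith
      · have hempt : (Finset.range (B + 1)).filter (fun m : ℕ => (m : ℝ) ≤ c) = ∅ := by
          apply Finset.filter_false_of_mem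
          intro m _
          push_neg at hcpos ⊢
          calc c < 0 := hcpos
            _ ≤ (m : ℝ) := Nat.cast_nonneg m
        rw [hempt]
        simp only [Finset.card_empty, Nat.cast_zero]
        nlinarith
    calc ((univ.filter (fun i : Fin (B + 1) => ω ∈ A i)).card : ENNReal)
        ≤ ((((Finset.range (B + 1)).filter (fun m : ℕ => (m : ℝ) ≤ c)).card : ℕ) : ENNReal) := by
          exact_mod_cast hcard1
      _ = ENNReal.ofReal (((((Finset.range (B + 1)).filter
            (fun m : ℕ => (m : ℝ) ≤ c)).card : ℕ) : ℝ)) := by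
          rw [ENNReal.ofReal_natCast]
      _ ≤ ENNReal.ofReal (α * ((B : ℝ) + 1)) := ENNReal.ofReal_le_ofReal hcard2
  -- integrate
  have hintsum : ∑ i : Fin (B + 1), μ (A i)
      ≤ ENNReal.ofReal (α * ((B : ℝ) + 1)) := by
    have h1 : ∑ i : Fin (B + 1), μ (A i)
        = ∫⁻ ω, ∑ i : Fin (B + 1), (A i).indicator (fun _ => (1 : ENNReal)) ω ∂μ := by
      rw [lintegral_finset_sum]
      · apply Finset.sum_congr rfl
        intro i _
        exact (lintegral_indicator_one (hAmeas i)).symm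
      · exact fun i _ => measurable_one.indicator (hAmeas i)
    rw [h1]
    calc ∫⁻ ω, ∑ i : Fin (B + 1), (A i).indicator (fun _ => (1 : ENNReal)) ω ∂μ
        ≤ ∫⁻ _, ENNReal.ofReal (α * ((B : ℝ) + 1)) ∂μ := by
          apply lintegral_mono_ae
          filter_upwards [hG] with ω hω
          exact hptwise ω hω
      _ = ENNReal.ofReal (α * ((B : ℝ) + 1)) := by
          rw [lintegral_const, measure_univ, mul_one]
  have hsum0 : ∑ i : Fin (B + 1), μ (A i) = ((B : ENNReal) + 1) * μ (A 0) := by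
    rw [Finset.sum_congr rfl (fun i _ => hsame i), Finset.sum_const, Finset.card_univ,
      Fintype.card_fin, nsmul_eq_mul]
    push_cast
    ring
  rw [hset]
  have hfinal : ((B : ENNReal) + 1) * μ (A 0)
      ≤ ((B : ENNReal) + 1) * ENNReal.ofReal α := by
    rw [← hsum0]
    calc ∑ i : Fin (B + 1), μ (A i) ≤ ENNReal.ofReal (α * ((B : ℝ) + 1)) := hintsum
      _ = ((B : ENNReal) + 1) * ENNReal.ofReal α := by
          rw [ENNReal.ofReal_mul (le_of_lt hα0)]
          rw [show ((B : ℝ) + 1) = ((B + 1 : ℕ) : ℝ) by push_cast; ring,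
            ENNReal.ofReal_natCast]
          push_cast
          ring
  have h0 : ((B : ENNReal) + 1) ≠ 0 := by simp
  have htop : ((B : ENNReal) + 1) ≠ ⊤ :=
    ENNReal.add_ne_top.2 ⟨ENNReal.natCast_ne_top B, ENNReal.one_ne_top⟩
  exact (ENNReal.mul_le_mul_iff_right h0 htop).1 hfinal
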